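/- Let T be an order tree, R a ray of T, and t ∈ R a tail node of R. Then every ray R' of T containing t satisfies R ⊆ R'. -/
import Mathlib


def IsOrderTree (α : Type*) [PartialOrder α] : Prop :=
  (∃ r : α, ∀ t, r ≤ t) ∧ ∀ t : α, IsWellOrder {s : α // s ≤ t} (· < ·)

def IsPath {α : Type*} [PartialOrder α] (P : Set α) : Prop :=
  IsLowerSet P ∧ IsChain (· ≤ ·) P

def IsRay {α : Type*} [PartialOrder α] (R : Set α) : Prop :=
  IsPath R ∧ R.Nonempty ∧ ∀ t ∈ R, ∃ s ∈ R, t < s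

def IsSuccOf {α : Type*} [PartialOrder α] (s t : α) : Prop :=
  t < s ∧ ∀ u, t < u → ¬ u < s

def IsBranching {α : Type*} [PartialOrder α] (t : α) : Prop :=
  ∃ s₁ s₂, IsSuccOf s₁ t ∧ IsSuccOf s₂ t ∧ s₁ ≠ s₂

def HasOrderTypeOmega {α : Type*} [PartialOrder α] (S : Set α) : Prop :=
  Nonempty (S ≃o ℕ)

def IsTailNode {α : Type*} [PartialOrder α] (R : Set α) (t : α) : Prop :=
  t ∈ R ∧ HasOrderTypeOmega (R \ {s | s ≤ t}) ∧
    ∀ u ∈ (R \ {s | s ≤ t}) ∪ {t}, ¬ IsBranching u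

noncomputable def nodeHeight {α : Type*} [PartialOrder α] (t : α)
    [IsWellOrder {s : α // s < t} (· < ·)] : Ordinal :=
  Ordinal.type ((· < ·) : {s : α // s < t} → {s : α // s < t} → Prop)

lemma exists_succ_in_ray {α : Type*} [PartialOrder α] (hT : IsOrderTree α) {P : Set α}
    (hP : IsRay P) {x : α} (hx : x ∈ P) : ∃ y ∈ P, IsSuccOf y x := by
  obtain ⟨s', hs'P, hxs'⟩ := hP.2.2 x hx
  haveI := hT.2 s'
  have hwf : WellFounded ((· < ·) : {s : α // s ≤ s'} → {s : α // s ≤ s'} → Prop) :=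
    IsWellFounded.wf
  have hne : ({z : {s : α // s ≤ s'} | x < z.1}).Nonempty := ⟨⟨s', le_refl _⟩, hxs'⟩
  obtain ⟨m, hm, hmin⟩ := hwf.has_min _ hne
  refine ⟨m.1, hP.1.1 m.2 hs'P, hm, fun u hu hul => ?_⟩
  exact hmin ⟨u, le_trans hul.le m.2⟩ hu hul

lemma succ_unique {α : Type*} [PartialOrder α] {x y y' : α} (hnb : ¬ IsBranching x)
    (hy : IsSuccOf y x) (hy' : IsSuccOf y' x) : y = y' := by
  by_contra h
  exact hnb ⟨y, y', hy, hy', h⟩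

/-- any ray containing a tail node `t` of `R` contains all of `R`. -/
theorem stmt2 {α : Type*} [PartialOrder α] (hT : IsOrderTree α) (R : Set α)
    (hR : IsRay R) (t : α) (ht : IsTailNode R t) :
    ∀ R' : Set α, IsRay R' → t ∈ R' → R ⊆ R' := by
  intro R' hR' htR'
  obtain ⟨htR, ⟨e⟩, hnb⟩ := ht
  set S : Set α := R \ {s | s ≤ t} with hS
  -- notation for the tail enumeration
  set u : ℕ → α := fun n => (e.symm n : α) with hu
  have huS : ∀ n, u n ∈ S := fun n => (e.symm n).2
  have huR : ∀ n, u n ∈ R := fun n => (huS n).1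
  have hunle : ∀ n, ¬ u n ≤ t := fun n => (huS n).2
  have htlt : ∀ n, t < u n := by
    intro n
    rcases hR.1.2.total htR (huR n) with h | h
    · exact lt_of_le_of_ne h (fun h' => (hunle n) (h' ▸ le_refl t))
    · exact absurd h (hunle n)
  -- the enumeration is monotone
  have humono : ∀ m n : ℕ, m < n → u m < u n := by
    intro m n hmn
    have : e.symm m < e.symm n := by
      rw [← e.lt_iff_lt, e.apply_symm_apply, e.apply_symm_apply]; exact hmn
    exact this
  -- u 0 is the tree-successor of t
  have hsucc0 : IsSuccOf (u 0) t := by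
    refine ⟨htlt 0, fun v hv hvlt => ?_⟩
    have hvR : v ∈ R := hR.1.1 hvlt.le (huR 0)
    have hvS : v ∈ S := ⟨hvR, fun h => absurd (lt_of_lt_of_le hv h) (lt_irrefl t)⟩
    have : e ⟨v, hvS⟩ < e (e.symm 0) := by
      rw [e.lt_iff_lt]; exact hvlt
    rw [e.apply_symm_apply] at this
    exact Nat.not_lt_zero _ this
  -- u (n+1) is the tree-successor of u n
  have hsuccn : ∀ n, IsSuccOf (u (n + 1)) (u n) := by
    intro n
    obtain ⟨y, hyR, hysucc⟩ := exists_succ_in_ray hT hR (huR n)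
    have hyS : y ∈ S := by
      refine ⟨hyR, fun h => (hunle n) (le_trans hysucc.1.le h)⟩
    have hlt : (n : ℕ) < e ⟨y, hyS⟩ := by
      have : e (e.symm n) < e ⟨y, hyS⟩ := by
        rw [e.lt_iff_lt]; exact hysucc.1
      rwa [e.apply_symm_apply] at this
    have hle : u (n + 1) ≤ y := by
      have : e.symm (n + 1) ≤ e.symm (e ⟨y, hyS⟩) := by
        rw [e.symm.le_iff_le]; exact hlt
      rw [e.symm_apply_apply] at this
      exact this
    have hnlt : ¬ u (n + 1) < y := hysucc.2 _ (humono n (n + 1) (Nat.lt_succ_self n))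
    have : u (n + 1) = y := by
      rcases lt_or_eq_of_le hle with h | h
      · exact absurd h hnlt
      · exact h
    rw [this]; exact hysucc
  -- by induction, every u n lies in R'
  have hmain : ∀ n, u n ∈ R' := by
    intro n
    induction n with
    | zero =>
      obtain ⟨y', hy'R', hy'succ⟩ := exists_succ_in_ray hT hR' htR'
      have : y' = u 0 := succ_unique (hnb t (Or.inr rfl)) hy'succ hsucc0
      rwa [this] at hy'R'
    | succ n ih =>
      obtain ⟨y', hy'R', hy'succ⟩ := exists_succ_in_ray hT hR' ih
      have : y' = u (n + 1) := succ_unique (hnb (u n) (Or.inl (huS n))) hy'succ (hsuccn n)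
      rwa [this] at hy'R'
  -- conclude
  intro s hs
  by_cases hst : s ≤ t
  · exact hR'.1.1 hst htR'
  · have hsS : s ∈ S := ⟨hs, hst⟩
    have : s = u (e ⟨s, hsS⟩) := by
      simp [hu]
    rw [this]
    exact hmain _
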